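/- Let 0 < R < 1 and D = {ζ : R < |ζ| < 1}, and let Φ(ζ) = conj(ζ) on bD. For every integer n ≠ 1, the harmonic extension of ζ ↦ Re(ζ^n Φ(ζ)) to D is the real part of a single-valued holomorphic function on D, namely z ↦ c (z^{n−1} − z^{1−n}) + z^{n−1} with c = (R^{n+1} − R^{n−1})/(R^{n−1} − R^{1−n}); yet Φ does not extend holomorphically through D. -/

import Mathlib

open Complex Set

/-- `Φ` (defined on `bD = frontier D`) extends holomorphically through `D`. -/
def ExtendsHolo (D : Set ℂ) (Φ : ℂ → ℂ) : Prop :=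
  ∃ F : ℂ → ℂ, ContinuousOn F (closure D) ∧ DifferentiableOn ℂ F D ∧
    Set.EqOn F Φ (frontier D)

open Metric in
lemma aux_mem_closure {R : ℝ} (hR0 : 0 < R) (hR1 : R < 1) {z : ℂ}
    (h1 : R ≤ ‖z‖) (h2 : ‖z‖ ≤ 1) :
    z ∈ closure {ζ : ℂ | R < ‖ζ‖ ∧ ‖ζ‖ < 1} := by
  have hz0 : (0:ℝ) < ‖z‖ := lt_of_lt_of_le hR0 h1
  set a := R / ‖z‖ with ha
  set b := 1 / ‖z‖ with hb
  have hab : a < b := by rw [ha, hb]; gcongr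
  have h1' : (1:ℝ) ∈ closure (Ioo a b) := by
    rw [closure_Ioo hab.ne]
    exact ⟨(div_le_one hz0).mpr h1, one_le_one_div hz0 h2⟩
  have hmaps : MapsTo (fun t : ℝ => (t:ℂ) * z) (Ioo a b)
      {ζ : ℂ | R < ‖ζ‖ ∧ ‖ζ‖ < 1} := by
    intro t ht
    have ha0 : 0 < a := div_pos hR0 hz0
    have ht0 : 0 < t := lt_trans ha0 ht.1
    have habs : ‖(t:ℂ) * z‖ = t * ‖z‖ := by
      rw [norm_mul, Complex.norm_real, Real.norm_eq_abs, abs_of_pos ht0]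
    constructor
    · show R < ‖_‖
      rw [habs]
      calc R = (R / ‖z‖) * ‖z‖ := by field_simp
        _ < t * ‖z‖ := by gcongr; exact ht.1
    · show ‖_‖ < 1
      rw [habs]
      calc t * ‖z‖ < b * ‖z‖ := by gcongr; exact ht.2
        _ = 1 := by rw [hb]; field_simp
  have hc : ContinuousWithinAt (fun t : ℝ => (t:ℂ) * z) (Ioo a b) 1 :=
    Continuous.continuousWithinAt (by continuity)
  have hmem := hc.mem_closure_image h1'
  have : ((1:ℝ):ℂ) * z = z := by simp
  rw [this] at hmem
  exact closure_mono hmaps.image_subset hmem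

lemma conj_eq_abs_sq_mul_inv (w : ℂ) (hw : w ≠ 0) :
    (starRingEnd ℂ) w = ((‖w‖ : ℂ))^2 * w⁻¹ := by
  have h := Complex.mul_conj w
  rw [Complex.normSq_eq_norm_sq] at h
  field_simp
  rw [mul_comm]
  exact_mod_cast h

lemma inv_eq_conj_aux (w : ℂ) (hw : w ≠ 0) :
    w⁻¹ = ((‖w‖⁻¹^2 : ℝ) : ℂ) * (starRingEnd ℂ) w := by
  have habs : ‖w‖ ≠ 0 := by simpa using hw
  rw [conj_eq_abs_sq_mul_inv w hw]
  push_cast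
  field_simp
  exact (div_self (Complex.ofReal_ne_zero.mpr habs)).symm

open Metric in
theorem stmt_9 (R : ℝ) (hR0 : 0 < R) (hR1 : R < 1)
    (D : Set ℂ) (hD : D = {ζ : ℂ | R < ‖ζ‖ ∧ ‖ζ‖ < 1}) :
    (∀ n : ℤ, n ≠ 1 →
      ∀ c : ℂ, c = (((R : ℂ) ^ (n + 1) - (R : ℂ) ^ (n - 1)) /
          ((R : ℂ) ^ (n - 1) - (R : ℂ) ^ (1 - n))) →
        -- the harmonic extension of `ζ ↦ Re (ζ^n conj ζ)` is the real part of
        -- the single-valued holomorphic function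
        -- `F : z ↦ c (z^{n-1} - z^{1-n}) + z^{n-1}` on `D`:
        ContinuousOn (fun z : ℂ => c * (z ^ (n - 1) - z ^ (1 - n)) + z ^ (n - 1))
          (closure D) ∧
        DifferentiableOn ℂ
          (fun z : ℂ => c * (z ^ (n - 1) - z ^ (1 - n)) + z ^ (n - 1)) D ∧
        (∀ ζ ∈ frontier D,
          (c * (ζ ^ (n - 1) - ζ ^ (1 - n)) + ζ ^ (n - 1)).re =
            (ζ ^ n * (starRingEnd ℂ) ζ).re)) ∧
    -- yet `Φ : ζ ↦ conj ζ` does not extend holomorphically through `D`: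
    ¬ ExtendsHolo D (fun ζ => (starRingEnd ℂ) ζ) := by
  have hRC : (R:ℂ) ≠ 0 := Complex.ofReal_ne_zero.mpr hR0.ne'
  have hDopen : IsOpen D := by
    rw [hD]
    exact isOpen_Ioo.preimage continuous_norm
  have hclos : closure D = {ζ : ℂ | R ≤ ‖ζ‖ ∧ ‖ζ‖ ≤ 1} := by
    apply Subset.antisymm
    · apply closure_minimal
      · rw [hD]; intro z hz; exact ⟨hz.1.le, hz.2.le⟩
      · have : {ζ : ℂ | R ≤ ‖ζ‖ ∧ ‖ζ‖ ≤ 1} =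
            {ζ : ℂ | R ≤ ‖ζ‖} ∩ {ζ : ℂ | ‖ζ‖ ≤ 1} := rfl
        rw [this]
        exact (isClosed_le continuous_const continuous_norm).inter
          (isClosed_le continuous_norm continuous_const)
    · rintro z ⟨h1, h2⟩
      rw [hD]
      exact aux_mem_closure hR0 hR1 h1 h2
  have hfr : frontier D = {ζ : ℂ | ‖ζ‖ = R ∨ ‖ζ‖ = 1} := by
    rw [frontier, hDopen.interior_eq, hclos, hD]
    ext z
    simp only [mem_diff, mem_setOf_eq, not_and, not_lt]
    constructor
    · rintro ⟨⟨hra, hb⟩, h⟩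
      rcases eq_or_lt_of_le hra with h1 | h1
      · exact Or.inl h1.symm
      · exact Or.inr (le_antisymm hb (h h1))
    · rintro (h | h)
      · exact ⟨⟨h.ge, by rw [h]; exact hR1.le⟩, fun hlt => absurd h hlt.ne'⟩
      · exact ⟨⟨by rw [h]; exact hR1.le, h.le⟩, fun _ => h.ge⟩
  have hball : Metric.ball (0:ℂ) 1 \ Metric.closedBall 0 R = D := by
    rw [hD]; ext z
    simp only [mem_diff, Metric.mem_ball, Metric.mem_closedBall, Complex.dist_eq, sub_zero,
      mem_setOf_eq, not_le]
    tauto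
  have hcball : Metric.closedBall (0:ℂ) 1 \ Metric.ball 0 R = closure D := by
    rw [hclos]; ext z
    simp only [mem_diff, Metric.mem_ball, Metric.mem_closedBall, Complex.dist_eq, sub_zero,
      mem_setOf_eq, not_lt]
    tauto
  constructor
  · intro n hn c hc
    set m : ℤ := n - 1 with hmdef
    have hm : m ≠ 0 := sub_ne_zero.mpr hn
    set t : ℝ := R ^ m with htdef
    have ht0 : 0 < t := zpow_pos hR0 m
    have ht1 : t ≠ 1 := by
      intro h
      apply hm
      have h' : R ^ m = R ^ (0:ℤ) := by rw [zpow_zero, ← htdef]; exact h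
      exact zpow_right_injective₀ hR0 hR1.ne h'
    have hden : t - t⁻¹ ≠ 0 := by
      rw [sub_ne_zero]
      intro h
      have h2 : t * t = 1 := by
        nth_rewrite 2 [h]
        exact mul_inv_cancel₀ ht0.ne'
      apply ht1
      nlinarith [h2, ht0]
    -- c is (the cast of) a real number
    have e1 : (R:ℂ) ^ m = ((t:ℝ):ℂ) := by rw [htdef, Complex.ofReal_zpow]
    have hcr : c = (((t * R^2 - t) / (t - t⁻¹) : ℝ) : ℂ) := by
      rw [hc]
      have e2 : (R:ℂ) ^ (n + 1) = ((t:ℝ):ℂ) * ((R:ℝ):ℂ)^(2:ℕ) := by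
        rw [show n + 1 = m + (2:ℤ) by rw [hmdef]; ring, zpow_add₀ hRC, e1]
        norm_cast
      have e3 : (R:ℂ) ^ (1 - n) = (((t⁻¹:ℝ)):ℂ) := by
        rw [show (1:ℤ) - n = -m by rw [hmdef]; ring, zpow_neg, e1, Complex.ofReal_inv]
      rw [e2, e3, e1]
      push_cast
      ring
    have hkey : (t * R^2 - t) / (t - t⁻¹) * (1 - (t⁻¹)^2) + 1 = R^2 := by
      rw [div_mul_eq_mul_div, div_add' _ _ _ hden, div_eq_iff hden]
      field_simp
      ring
    have hdiff : DifferentiableOn ℂ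
        (fun z : ℂ => c * (z ^ m - z ^ (1 - n)) + z ^ m) {(0:ℂ)}ᶜ := by
      intro z hz
      have hz0 : z ≠ 0 := by simpa using hz
      exact ((((differentiableAt_zpow.mpr (Or.inl hz0)).sub
        (differentiableAt_zpow.mpr (Or.inl hz0))).const_mul c).add
        (differentiableAt_zpow.mpr (Or.inl hz0))).differentiableWithinAt
    have hsub1 : closure D ⊆ {(0:ℂ)}ᶜ := by
      rw [hclos]
      intro z hz
      simp only [mem_compl_iff, mem_singleton_iff]
      intro h
      rw [h] at hz
      simp only [mem_setOf_eq, norm_zero] at hz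
      linarith [hz.1]
    refine ⟨hdiff.continuousOn.mono hsub1, hdiff.mono (subset_closure.trans hsub1), ?_⟩
    intro ζ hζ
    rw [hfr] at hζ
    have hζR : ‖ζ‖ = R ∨ ‖ζ‖ = 1 := hζ
    have hζ0 : ζ ≠ 0 := by
      rcases hζR with h | h <;>
        (intro h0; rw [h0, norm_zero] at h; linarith)
    have hzm : ζ ^ (1 - n) = (ζ ^ m)⁻¹ := by
      rw [show (1:ℤ) - n = -m by rw [hmdef]; ring, zpow_neg]
    have hζm0 : ζ ^ m ≠ 0 := zpow_ne_zero m hζ0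
    have hconjm := inv_eq_conj_aux (ζ ^ m) hζm0
    rw [norm_zpow] at hconjm
    rcases hζR with habs | habs
    · -- |ζ| = R
      have hcR : (starRingEnd ℂ) ζ = ((R:ℝ):ℂ)^2 * ζ⁻¹ := by
        rw [conj_eq_abs_sq_mul_inv ζ hζ0, habs]
      have hrhs : ζ ^ n * (starRingEnd ℂ) ζ = ((R:ℝ):ℂ)^2 * ζ ^ m := by
        rw [hcR, show ζ⁻¹ = ζ ^ (-1:ℤ) from (zpow_neg_one ζ).symm,
          show ζ ^ n * (((R:ℝ):ℂ)^2 * ζ ^ (-1:ℤ)) = ((R:ℝ):ℂ)^2 * (ζ ^ n * ζ ^ (-1:ℤ)) by ring,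
          ← zpow_add₀ hζ0, show n + (-1:ℤ) = m by rw [hmdef]; ring]
      rw [habs, ← htdef] at hconjm
      rw [hcr, hzm, hconjm, hrhs,
        show ((R:ℝ):ℂ)^2 = (((R^2 : ℝ)):ℂ) by push_cast; ring]
      simp only [Complex.add_re, Complex.sub_re, Complex.re_ofReal_mul, Complex.conj_re]
      have hu := hkey
      linear_combination (ζ ^ m).re * hkey
    · -- |ζ| = 1
      have hc1 : (starRingEnd ℂ) ζ = ζ⁻¹ := by
        rw [conj_eq_abs_sq_mul_inv ζ hζ0, habs]
        simp
      have hrhs : ζ ^ n * (starRingEnd ℂ) ζ = ζ ^ m := by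
        rw [hc1, show ζ⁻¹ = ζ ^ (-1:ℤ) from (zpow_neg_one ζ).symm, ← zpow_add₀ hζ0,
          show n + (-1:ℤ) = m by rw [hmdef]; ring]
      rw [habs] at hconjm
      simp only [one_zpow, inv_one, one_pow, Complex.ofReal_one, one_mul] at hconjm
      rw [hcr, hzm, hconjm, hrhs]
      simp only [Complex.add_re, Complex.sub_re, Complex.re_ofReal_mul, Complex.conj_re]
      ring
  · rintro ⟨F, hFc, hFd, hFeq⟩
    have hsphR : Metric.sphere (0:ℂ) R ⊆ frontier D := by
      rw [hfr]
      intro z hz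
      left
      simpa [Complex.dist_eq] using hz
    have hsph1 : Metric.sphere (0:ℂ) 1 ⊆ frontier D := by
      rw [hfr]
      intro z hz
      right
      simpa [Complex.dist_eq] using hz
    have hint : (∮ z in C(0, 1), F z) = ∮ z in C(0, R), F z := by
      apply circleIntegral_eq_of_differentiable_on_annulus_off_countable hR0 hR1.le
        countable_empty
      · rw [hcball]; exact hFc
      · intro z hz
        rw [diff_empty, hball] at hz
        exact hFd.differentiableAt (hDopen.mem_nhds hz)
    have h1 : (∮ z in C(0, 1), F z) = 2 * Real.pi * I := by
      have e : (∮ z in C(0, 1), F z) = ∮ z in C(0, 1), (z - 0)⁻¹ := by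
        apply circleIntegral.integral_congr zero_le_one
        intro z hz
        have hz1 : ‖z‖ = 1 := by simpa [Complex.dist_eq] using hz
        have hz0 : z ≠ 0 := by
          intro h; rw [h, norm_zero] at hz1; norm_num at hz1
        rw [hFeq (hsph1 hz)]
        simp only [sub_zero]
        rw [conj_eq_abs_sq_mul_inv z hz0, hz1]
        simp
      rw [e, circleIntegral.integral_sub_inv_of_mem_ball (Metric.mem_ball_self zero_lt_one)]
    have h2 : (∮ z in C(0, R), F z) = ((R:ℝ):ℂ)^2 * (2 * Real.pi * I) := by
      have e : (∮ z in C(0, R), F z) = ∮ z in C(0, R), (((R:ℝ):ℂ)^2 : ℂ) • (z - 0)⁻¹ := by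
        apply circleIntegral.integral_congr hR0.le
        intro z hz
        have hzR : ‖z‖ = R := by simpa [Complex.dist_eq] using hz
        have hz0 : z ≠ 0 := by
          intro h; rw [h, norm_zero] at hzR; exact hR0.ne hzR
        rw [hFeq (hsphR hz)]
        simp only [sub_zero, smul_eq_mul]
        rw [conj_eq_abs_sq_mul_inv z hz0, hzR]
      rw [e, circleIntegral.integral_smul,
        circleIntegral.integral_sub_inv_of_mem_ball (Metric.mem_ball_self hR0)]
      simp [smul_eq_mul]
    have hpi : (2 * (Real.pi:ℂ) * I : ℂ) ≠ 0 :=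
      mul_ne_zero (mul_ne_zero two_ne_zero
        (Complex.ofReal_ne_zero.mpr Real.pi_ne_zero)) Complex.I_ne_zero
    rw [h1, h2] at hint
    have hone : (1:ℂ) * (2 * Real.pi * I) = ((R:ℝ):ℂ)^2 * (2 * Real.pi * I) := by
      rw [one_mul]; exact hint
    have hR2 : ((R:ℝ):ℂ)^2 = 1 := (mul_right_cancel₀ hpi hone).symm
    have hR2' : R^2 = 1 := by exact_mod_cast hR2
    nlinarith [hR0, hR1, hR2']
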